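/- Let n ≥ 1 and δ ∈ (0, 1). For each i ∈ {1, …, n}, let X_{i,1}, X_{i,2}, … be random variables taking values in [0, 1], all of them mutually independent, with E[X_{i,t}] = d_i for all t. Let β(t, δ') = 2·log(125·log(1.12·t)/δ') and α_i(t) = √(2·β(t, δ/n)/t). Then with probability at least 1 − δ, simultaneously for every i ∈ {1, …, n} and every integer t ≥ 1, the empirical mean satisfies |(1/t)·Σ_{s=1}^{t} X_{i,s} − d_i| ≤ α_i(t). -/

import Mathlib

open MeasureTheory ProbabilityTheory Real

section Helpers

lemma Mpos (p : ℝ) (hp0 : 0 ≤ p) (hp1 : p ≤ 1) (x : ℝ) : 0 < 1 - p + p * exp x := by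
  rcases eq_or_lt_of_le hp0 with h | h
  · simp [← h]
  · nlinarith [mul_pos h (exp_pos x)]

lemma deriv_bound (p : ℝ) (hp0 : 0 ≤ p) (hp1 : p ≤ 1) (l : ℝ) (hl : 0 ≤ l) :
    p * exp l / (1 - p + p * exp l) ≤ p + l / 4 := by
  set h : ℝ → ℝ := fun x => p + x / 4 - p * exp x / (1 - p + p * exp x) with hh
  have hd : ∀ x, HasDerivAt h
      (1 / 4 - p * exp x * (1 - p) / (1 - p + p * exp x) ^ 2) x := by
    intro x
    have hM' : HasDerivAt (fun x => 1 - p + p * exp x) (p * exp x) x := by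
      simpa using ((Real.hasDerivAt_exp x).const_mul p).const_add (1 - p)
    have hq : HasDerivAt (fun x => p * exp x / (1 - p + p * exp x))
        ((p * exp x * (1 - p + p * exp x) - p * exp x * (p * exp x)) /
          (1 - p + p * exp x) ^ 2) x :=
      (((Real.hasDerivAt_exp x).const_mul p)).div hM' (Mpos p hp0 hp1 x).ne'
    have h1 : HasDerivAt h (0 + 1 / 4 -
        (p * exp x * (1 - p + p * exp x) - p * exp x * (p * exp x)) /
          (1 - p + p * exp x) ^ 2) x :=
      (((hasDerivAt_const x p).add ((hasDerivAt_id x).div_const 4))).sub hq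
    convert h1 using 1
    ring
  have hmono : Monotone h := by
    apply monotone_of_deriv_nonneg
    · exact fun x => (hd x).differentiableAt
    · intro x
      rw [(hd x).deriv]
      have hMx := Mpos p hp0 hp1 x
      have h2 : (0:ℝ) < (1 - p + p * exp x) ^ 2 := by positivity
      rw [sub_nonneg, div_le_iff₀ h2]
      nlinarith [sq_nonneg (1 - p - p * exp x), exp_pos x]
  have h0 : h 0 = 0 := by simp [hh]
  have := hmono hl
  rw [h0] at this
  simp only [hh] at this
  linarith

lemma log_M_bound (p : ℝ) (hp0 : 0 ≤ p) (hp1 : p ≤ 1) (l : ℝ) (hl : 0 ≤ l) :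
    Real.log (1 - p + p * exp l) ≤ l ^ 2 / 8 + l * p := by
  set G : ℝ → ℝ := fun x => x ^ 2 / 8 + x * p - Real.log (1 - p + p * exp x) with hG
  have hd : ∀ x, HasDerivAt G
      (x / 4 + p - p * exp x / (1 - p + p * exp x)) x := by
    intro x
    have hM' : HasDerivAt (fun x => 1 - p + p * exp x) (p * exp x) x := by
      simpa using ((Real.hasDerivAt_exp x).const_mul p).const_add (1 - p)
    have hlog : HasDerivAt (fun x => Real.log (1 - p + p * exp x))
        (p * exp x / (1 - p + p * exp x)) x := hM'.log (Mpos p hp0 hp1 x).ne'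
    have h1 : HasDerivAt (fun x : ℝ => x ^ 2 / 8 + x * p) (2 * x ^ 1 / 8 + p) x := by
      exact ((hasDerivAt_pow 2 x).div_const 8).add (hasDerivAt_mul_const p)
    have := h1.sub hlog
    exact this.congr_deriv (by ring)
  have hmono : MonotoneOn G (Set.Ici 0) := by
    apply monotoneOn_of_deriv_nonneg (convex_Ici 0)
    · exact Continuous.continuousOn
        (continuous_iff_continuousAt.mpr fun x => (hd x).differentiableAt.continuousAt)
    · intro x hx
      exact ((hd x).differentiableAt).differentiableWithinAt
    · intro x hx
      rw [interior_Ici] at hx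
      rw [(hd x).deriv]
      have := deriv_bound p hp0 hp1 x (le_of_lt hx)
      linarith
  have h0 : G 0 = 0 := by simp [hG]
  have := hmono (Set.self_mem_Ici) (Set.mem_Ici.mpr hl) hl
  rw [h0] at this
  simp only [hG] at this
  linarith

lemma mgf_bernoulli (p : ℝ) (hp0 : 0 ≤ p) (hp1 : p ≤ 1) (l : ℝ) (hl : 0 ≤ l) :
    (1 - p) * exp (-(l * p)) + p * exp (l * (1 - p)) ≤ exp (l ^ 2 / 8) := by
  have hM := Mpos p hp0 hp1 l
  have key := log_M_bound p hp0 hp1 l hl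
  have h1 : (1 - p) * exp (-(l * p)) + p * exp (l * (1 - p))
      = exp (-(l * p)) * (1 - p + p * exp l) := by
    rw [show l * (1 - p) = l + -(l * p) by ring, exp_add]
    ring
  rw [h1]
  calc exp (-(l * p)) * (1 - p + p * exp l)
      = exp (-(l * p)) * exp (Real.log (1 - p + p * exp l)) := by
        rw [exp_log hM]
    _ = exp (-(l * p) + Real.log (1 - p + p * exp l)) := by rw [← exp_add]
    _ ≤ exp (l ^ 2 / 8) := by
        apply exp_le_exp.mpr
        linarith


variable {Ω : Type*} [MeasurableSpace Ω] {P : Measure Ω} [IsProbabilityMeasure P]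

lemma integrable_of_bound (f : Ω → ℝ) (hf : Measurable f) (C : ℝ)
    (h : ∀ ω, |f ω| ≤ C) : Integrable f P :=
  (integrable_const C).mono' hf.aestronglyMeasurable (ae_of_all _ (by simpa using h))

lemma mgf_sum_le (Z : ℕ → Ω → ℝ) (hZm : ∀ s, Measurable (Z s))
    (hZb : ∀ s ω, |Z s ω| ≤ 1)
    (hind : ∀ t s : ℕ, t ≤ s → IndepFun (fun ω (r : Fin t) => Z r ω) (Z s) P)
    (l : ℝ) (hl : 0 ≤ l)
    (hmgf : ∀ s, ∫ ω, Real.exp (l * Z s ω) ∂P ≤ Real.exp (l ^ 2 / 8)) :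
    ∀ t : ℕ, ∫ ω, Real.exp (l * ∑ s ∈ Finset.range t, Z s ω) ∂P
      ≤ Real.exp (l ^ 2 * t / 8) := by
  have hSm : ∀ t, Measurable (fun ω => ∑ s ∈ Finset.range t, Z s ω) :=
    fun t => Finset.measurable_sum _ (fun s _ => hZm s)
  have hSb : ∀ t ω, |∑ s ∈ Finset.range t, Z s ω| ≤ t := by
    intro t ω
    calc |∑ s ∈ Finset.range t, Z s ω| ≤ ∑ s ∈ Finset.range t, |Z s ω| :=
          Finset.abs_sum_le_sum_abs _ _
      _ ≤ ∑ s ∈ Finset.range t, 1 := Finset.sum_le_sum (fun s _ => hZb s ω)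
      _ = t := by simp
  have hexpb : ∀ t ω, |Real.exp (l * ∑ s ∈ Finset.range t, Z s ω)| ≤ Real.exp (l * t) := by
    intro t ω
    rw [abs_of_pos (exp_pos _)]
    exact exp_le_exp.mpr (mul_le_mul_of_nonneg_left
      ((abs_le.mp (hSb t ω)).2) hl)
  have hexpint : ∀ t, Integrable (fun ω => Real.exp (l * ∑ s ∈ Finset.range t, Z s ω)) P :=
    fun t => integrable_of_bound _ ((hSm t).const_mul l).exp _ (hexpb t)
  intro t
  induction t with
  | zero => simp
  | succ t ih =>
    have hfact : ∀ ω : Ω, Real.exp (l * ∑ s ∈ Finset.range (t+1), Z s ω)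
        = Real.exp (l * ∑ s ∈ Finset.range t, Z s ω) * Real.exp (l * Z t ω) := by
      intro ω
      rw [Finset.sum_range_succ, mul_add, exp_add]
    have hindep : IndepFun (fun ω => Real.exp (l * ∑ s ∈ Finset.range t, Z s ω))
        (fun ω => Real.exp (l * Z t ω)) P := by
      have hG : Measurable (fun x : Fin t → ℝ => Real.exp (l * ∑ r, x r)) := by
        apply Measurable.exp
        exact (Finset.measurable_sum _ (fun r _ => measurable_pi_apply r)).const_mul l
      have hφ : Measurable (fun y : ℝ => Real.exp (l * y)) := (measurable_id.const_mul l).exp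
      have heq : (fun ω => Real.exp (l * ∑ s ∈ Finset.range t, Z s ω))
          = (fun x : Fin t → ℝ => Real.exp (l * ∑ r, x r)) ∘ (fun ω (r : Fin t) => Z r ω) := by
        funext ω
        simp only [Function.comp_apply]
        rw [Fin.sum_univ_eq_sum_range (fun r => Z r ω) t]
      rw [heq]
      exact (hind t t le_rfl).comp hG hφ
    calc ∫ ω, Real.exp (l * ∑ s ∈ Finset.range (t+1), Z s ω) ∂P
        = ∫ ω, Real.exp (l * ∑ s ∈ Finset.range t, Z s ω) * Real.exp (l * Z t ω) ∂P := by
          simp_rw [hfact]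
      _ = (∫ ω, Real.exp (l * ∑ s ∈ Finset.range t, Z s ω) ∂P)
            * ∫ ω, Real.exp (l * Z t ω) ∂P := by
          exact hindep.integral_mul_eq_mul_integral (hexpint t).aestronglyMeasurable
            (integrable_of_bound _ ((hZm t).const_mul l).exp _ (by
              intro ω
              rw [abs_of_pos (exp_pos _)]
              exact exp_le_exp.mpr (mul_le_mul_of_nonneg_left (abs_le.mp (hZb t ω)).2 hl))).aestronglyMeasurable
      _ ≤ Real.exp (l ^ 2 * t / 8) * Real.exp (l ^ 2 / 8) := by
          apply mul_le_mul ih (hmgf t) (integral_nonneg (fun ω => (exp_pos _).le))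
            (exp_nonneg _)
      _ = Real.exp (l ^ 2 * (t + 1 : ℕ) / 8) := by
          rw [← exp_add]
          congr 1
          push_cast
          ring

open Classical in
lemma maximal_bound (Z : ℕ → Ω → ℝ) (hZm : ∀ s, Measurable (Z s))
    (hZb : ∀ s ω, |Z s ω| ≤ 1)
    (hZ0 : ∀ s, ∫ ω, Z s ω ∂P = 0)
    (hind : ∀ t s : ℕ, t ≤ s → IndepFun (fun ω (r : Fin t) => Z r ω) (Z s) P)
    (l : ℝ) (hl : 0 ≤ l)
    (hmgf : ∀ s, ∫ ω, Real.exp (l * Z s ω) ∂P ≤ Real.exp (l ^ 2 / 8))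
    (v : ℕ) (ε : ℝ) :
    P {ω | ∃ t, 1 ≤ t ∧ t ≤ v ∧ ε ≤ ∑ s ∈ Finset.range t, Z s ω}
      ≤ ENNReal.ofReal (Real.exp (-(l * ε) + l ^ 2 * v / 8)) := by
  rcases le_or_gt ε 0 with hε | hε
  · -- trivial case: bound by 1
    refine le_trans prob_le_one ?_
    rw [ENNReal.one_le_ofReal, ← Real.exp_zero]
    apply Real.exp_le_exp.mpr
    have h1 : 0 ≤ -(l * ε) := by nlinarith
    have h2 : (0:ℝ) ≤ l ^ 2 * v / 8 := by positivity
    linarith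
  set S : ℕ → Ω → ℝ := fun t ω => ∑ s ∈ Finset.range t, Z s ω with hS
  have hSm : ∀ t, Measurable (S t) := fun t => Finset.measurable_sum _ (fun s _ => hZm s)
  have hSb : ∀ t ω, |S t ω| ≤ t := by
    intro t ω
    calc |S t ω| ≤ ∑ s ∈ Finset.range t, |Z s ω| := Finset.abs_sum_le_sum_abs _ _
      _ ≤ ∑ s ∈ Finset.range t, 1 := Finset.sum_le_sum (fun s _ => hZb s ω)
      _ = t := by simp
  have hexpb : ∀ t ω, |Real.exp (l * S t ω)| ≤ Real.exp (l * t) := by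
    intro t ω
    rw [abs_of_pos (exp_pos _)]
    exact exp_le_exp.mpr (mul_le_mul_of_nonneg_left ((abs_le.mp (hSb t ω)).2) hl)
  have hexpint : ∀ t, Integrable (fun ω => Real.exp (l * S t ω)) P :=
    fun t => integrable_of_bound _ ((hSm t).const_mul l).exp _ (hexpb t)
  -- first passage sets
  set A : ℕ → Set Ω := fun t => {ω | ε ≤ S t ω ∧ ∀ r < t, S r ω < ε} with hA
  have hAmeas : ∀ t, MeasurableSet (A t) := by
    intro t
    have hrepr : A t = {ω | ε ≤ S t ω} ∩ ⋂ r, ⋂ (_ : r < t), {ω | S r ω < ε} := by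
      ext ω; simp [hA]
    rw [hrepr]
    exact (measurableSet_le measurable_const (hSm t)).inter
      (MeasurableSet.iInter fun r => MeasurableSet.iInter fun _ =>
        measurableSet_lt (hSm r) measurable_const)
  -- the target event equals the union of the A t
  have hE : {ω | ∃ t, 1 ≤ t ∧ t ≤ v ∧ ε ≤ S t ω} = ⋃ t ∈ Finset.Icc 1 v, A t := by
    ext ω
    simp only [Set.mem_setOf_eq, Set.mem_iUnion, Finset.mem_Icc, exists_prop]
    constructor
    · rintro ⟨t, ht1, htv, htε⟩
      have hex : ∃ r, ε ≤ S r ω := ⟨t, htε⟩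
      set c := Nat.find hex with hc
      have hcspec : ε ≤ S c ω := Nat.find_spec hex
      have hcle : c ≤ t := Nat.find_min' hex htε
      have hc1 : 1 ≤ c := by
        rcases Nat.eq_zero_or_pos c with h0 | h; swap
        · exact h
        exfalso
        rw [h0] at hcspec
        simp only [hS] at hcspec
        simp at hcspec
        linarith
      refine ⟨c, ⟨hc1, le_trans hcle htv⟩, hcspec, ?_⟩
      intro r hr
      exact lt_of_not_ge (Nat.find_min hex hr)
    · rintro ⟨t, ⟨ht1, htv⟩, htε, _⟩
      exact ⟨t, ht1, htv, htε⟩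
  -- disjointness
  have hdisj : ∀ t t', t ≠ t' → ∀ ω, ω ∈ A t → ω ∉ A t' := by
    intro t t' hne ω hω hω'
    rcases lt_or_gt_of_ne hne with h | h
    · exact absurd hω.1 (not_le.mpr (hω'.2 t h))
    · exact absurd hω'.1 (not_le.mpr (hω.2 t' h))
  -- integrability of the indicator functions
  have hUb : ∀ t ω, |(A t).indicator (fun ω => Real.exp (l * S t ω)) ω| ≤ Real.exp (l * t) := by
    intro t ω
    by_cases hω : ω ∈ A t
    · rw [Set.indicator_of_mem hω]; exact hexpb t ω
    · rw [Set.indicator_of_notMem hω]; simp [Real.exp_nonneg]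
  have hUm : ∀ t, Measurable ((A t).indicator (fun ω => Real.exp (l * S t ω))) :=
    fun t => (((hSm t).const_mul l).exp).indicator (hAmeas t)
  have hUint : ∀ t, Integrable ((A t).indicator (fun ω => Real.exp (l * S t ω))) P :=
    fun t => integrable_of_bound _ (hUm t) _ (hUb t)
  have hZint : ∀ s, Integrable (Z s) P := fun s => integrable_of_bound _ (hZm s) 1 (hZb s)
  -- independence of the stopped indicator from future increments
  have hUindep : ∀ t s, t ≤ s →
      IndepFun ((A t).indicator (fun ω => Real.exp (l * S t ω))) (Z s) P := by
    intro t s hts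
    set ps : ℕ → (Fin t → ℝ) → ℝ :=
      fun r x => ∑ j ∈ Finset.range r, (if h : j < t then x ⟨j, h⟩ else 0) with hps
    have hpsm : ∀ r, Measurable (ps r) := by
      intro r
      apply Finset.measurable_sum
      intro j _
      by_cases h : j < t
      · simpa [h] using measurable_pi_apply (⟨j, h⟩ : Fin t)
      · simpa [h] using measurable_const
    set B : Set (Fin t → ℝ) := {x | ε ≤ ps t x ∧ ∀ r < t, ps r x < ε} with hB
    have hBmeas : MeasurableSet B := by
      have hrepr : B = {x | ε ≤ ps t x} ∩ ⋂ r, ⋂ (_ : r < t), {x | ps r x < ε} := by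
        ext x; simp [hB]
      rw [hrepr]
      exact (measurableSet_le measurable_const (hpsm t)).inter
        (MeasurableSet.iInter fun r => MeasurableSet.iInter fun _ =>
          measurableSet_lt (hpsm r) measurable_const)
    have hGm : Measurable (B.indicator (fun x => Real.exp (l * ps t x))) :=
      Measurable.indicator (((hpsm t).const_mul l).exp) hBmeas
    have hvec : ∀ (ω : Ω) (r : ℕ), r ≤ t → ps r (fun j : Fin t => Z j ω) = S r ω := by
      intro ω r hr
      simp only [hps, hS]
      refine Finset.sum_congr rfl (fun j hj => ?_)
      rw [dif_pos (lt_of_lt_of_le (Finset.mem_range.mp hj) hr)]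
    have hcomp : (A t).indicator (fun ω => Real.exp (l * S t ω))
        = (B.indicator (fun x => Real.exp (l * ps t x))) ∘ (fun ω (r : Fin t) => Z r ω) := by
      funext ω
      simp only [Function.comp_apply]
      have hmem : ((fun j : Fin t => Z j ω) ∈ B) ↔ ω ∈ A t := by
        simp only [hB, hA, Set.mem_setOf_eq]
        rw [hvec ω t le_rfl]
        constructor
        · rintro ⟨h1, h2⟩
          exact ⟨h1, fun r hr => by rw [← hvec ω r (le_of_lt hr)]; exact h2 r hr⟩
        · rintro ⟨h1, h2⟩
          exact ⟨h1, fun r hr => by rw [hvec ω r (le_of_lt hr)]; exact h2 r hr⟩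
      by_cases hω : ω ∈ A t
      · rw [Set.indicator_of_mem hω, Set.indicator_of_mem (hmem.mpr hω), hvec ω t le_rfl]
      · rw [Set.indicator_of_notMem hω,
          Set.indicator_of_notMem (fun hc => hω (hmem.mp hc))]
    rw [hcomp]
    exact (hind t s hts).comp hGm measurable_id
  -- zero-mean orthogonality
  have hUZ : ∀ t s, t ≤ s →
      ∫ ω, (A t).indicator (fun ω => Real.exp (l * S t ω)) ω * Z s ω ∂P = 0 := by
    intro t s hts
    have h := (hUindep t s hts).integral_mul_eq_mul_integral (hUint t).aestronglyMeasurable (hZint s).aestronglyMeasurable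
    have h2 : (fun ω => (A t).indicator (fun ω => Real.exp (l * S t ω)) ω * Z s ω)
        = ((A t).indicator fun ω => Real.exp (l * S t ω)) * Z s := rfl
    rw [h2, h, hZ0 s, mul_zero]
  -- key2 : stopped indicator integral grows to time v
  have hkey2 : ∀ t, t ≤ v →
      ∫ ω, (A t).indicator (fun ω => Real.exp (l * S t ω)) ω ∂P
        ≤ ∫ ω, (A t).indicator (fun ω => Real.exp (l * S v ω)) ω ∂P := by
    intro t htv
    have hSd : ∀ ω, S v ω - S t ω = ∑ s ∈ Finset.Ico t v, Z s ω := by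
      intro ω
      simp only [hS]
      rw [← Finset.sum_range_add_sum_Ico _ htv]
      ring
    have hpoint : ∀ ω, (A t).indicator (fun ω => Real.exp (l * S t ω)) ω
          + l * ∑ s ∈ Finset.Ico t v, (A t).indicator (fun ω => Real.exp (l * S t ω)) ω * Z s ω
        ≤ (A t).indicator (fun ω => Real.exp (l * S v ω)) ω := by
      intro ω
      by_cases hω : ω ∈ A t
      · rw [Set.indicator_of_mem hω, Set.indicator_of_mem hω, ← Finset.mul_sum, ← hSd ω]
        have h1 := Real.add_one_le_exp (l * (S v ω - S t ω))
        calc Real.exp (l * S t ω) + l * (Real.exp (l * S t ω) * (S v ω - S t ω))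
            = Real.exp (l * S t ω) * (1 + l * (S v ω - S t ω)) := by ring
          _ ≤ Real.exp (l * S t ω) * Real.exp (l * (S v ω - S t ω)) := by
              apply mul_le_mul_of_nonneg_left _ (Real.exp_nonneg _)
              linarith
          _ = Real.exp (l * S v ω) := by rw [← Real.exp_add]; ring_nf
      · rw [Set.indicator_of_notMem hω, Set.indicator_of_notMem hω]
        simp
    have hintsum : ∀ s ∈ Finset.Ico t v,
        Integrable (fun ω => (A t).indicator (fun ω => Real.exp (l * S t ω)) ω * Z s ω) P := by
      intro s _
      apply integrable_of_bound _ ((hUm t).mul (hZm s)) (Real.exp (l * t))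
      intro ω
      rw [Pi.mul_apply, abs_mul]
      calc |(A t).indicator (fun ω => Real.exp (l * S t ω)) ω| * |Z s ω|
          ≤ Real.exp (l * t) * 1 :=
            mul_le_mul (hUb t ω) (hZb s ω) (abs_nonneg _) (Real.exp_nonneg _)
        _ = Real.exp (l * t) := mul_one _
    have hIL : Integrable (fun ω => (A t).indicator (fun ω => Real.exp (l * S t ω)) ω
        + l * ∑ s ∈ Finset.Ico t v, (A t).indicator (fun ω => Real.exp (l * S t ω)) ω * Z s ω) P := by
      exact (hUint t).add ((integrable_finset_sum _ hintsum).const_mul l)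
    have hmono := integral_mono hIL (integrable_of_bound _
        ((((hSm v).const_mul l).exp).indicator (hAmeas t)) (Real.exp (l * v)) (by
          intro ω
          by_cases hω : ω ∈ A t
          · rw [Set.indicator_of_mem hω]; exact hexpb v ω
          · rw [Set.indicator_of_notMem hω]; simp [Real.exp_nonneg])) hpoint
    have hexpand : ∫ ω, ((A t).indicator (fun ω => Real.exp (l * S t ω)) ω
        + l * ∑ s ∈ Finset.Ico t v, (A t).indicator (fun ω => Real.exp (l * S t ω)) ω * Z s ω) ∂P
        = ∫ ω, (A t).indicator (fun ω => Real.exp (l * S t ω)) ω ∂P := by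
      rw [integral_add (hUint t) ((integrable_finset_sum _ hintsum).const_mul l)]
      rw [integral_const_mul, integral_finset_sum _ hintsum]
      rw [Finset.sum_eq_zero (fun s hs => hUZ t s (Finset.mem_Ico.mp hs).1)]
      ring
    rw [hexpand] at hmono
    exact hmono
  -- key1 : lower bound by the measure of A t
  have hkey1 : ∀ t, Real.exp (l * ε) * (P (A t)).toReal
      ≤ ∫ ω, (A t).indicator (fun ω => Real.exp (l * S t ω)) ω ∂P := by
    intro t
    rw [integral_indicator (hAmeas t), mul_comm (Real.exp (l * ε))]
    apply MeasureTheory.setIntegral_ge_of_const_le (hAmeas t) (measure_ne_top P _)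
    · intro ω hω
      exact Real.exp_le_exp.mpr (mul_le_mul_of_nonneg_left hω.1 hl)
    · exact (hexpint t).integrableOn
  -- key3 : the sum over first-passage cells is bounded by the full mgf
  have hkey3 : ∑ t ∈ Finset.Icc 1 v,
      ∫ ω, (A t).indicator (fun ω => Real.exp (l * S v ω)) ω ∂P
      ≤ Real.exp (l ^ 2 * v / 8) := by
    have hIv : ∀ t, Integrable ((A t).indicator (fun ω => Real.exp (l * S v ω))) P := by
      intro t
      apply integrable_of_bound _ ((((hSm v).const_mul l).exp).indicator (hAmeas t))
        (Real.exp (l * v))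
      intro ω
      by_cases hω : ω ∈ A t
      · rw [Set.indicator_of_mem hω]; exact hexpb v ω
      · rw [Set.indicator_of_notMem hω]; simp [Real.exp_nonneg]
    rw [← integral_finset_sum _ (fun t _ => hIv t)]
    calc ∫ ω, ∑ t ∈ Finset.Icc 1 v, (A t).indicator (fun ω => Real.exp (l * S v ω)) ω ∂P
        ≤ ∫ ω, Real.exp (l * S v ω) ∂P := by
          apply integral_mono (integrable_finset_sum _ (fun t _ => hIv t)) (hexpint v)
          intro ω
          dsimp only
          by_cases hex : ∃ t₀ ∈ Finset.Icc 1 v, ω ∈ A t₀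
          · obtain ⟨t₀, ht₀, hmem⟩ := hex
            rw [Finset.sum_eq_single t₀
              (fun t ht hne => Set.indicator_of_notMem (hdisj t₀ t (Ne.symm hne) ω hmem) _)
              (fun h => absurd ht₀ h)]
            rw [Set.indicator_of_mem hmem]
          · push_neg at hex
            rw [Finset.sum_eq_zero (fun t ht => Set.indicator_of_notMem (hex t ht) _)]
            exact Real.exp_nonneg _
      _ ≤ Real.exp (l ^ 2 * v / 8) := mgf_sum_le Z hZm hZb hind l hl hmgf v
  -- combine
  have hchain : Real.exp (l * ε) * ∑ t ∈ Finset.Icc 1 v, (P (A t)).toReal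
      ≤ Real.exp (l ^ 2 * v / 8) := by
    rw [Finset.mul_sum]
    calc ∑ t ∈ Finset.Icc 1 v, Real.exp (l * ε) * (P (A t)).toReal
        ≤ ∑ t ∈ Finset.Icc 1 v, ∫ ω, (A t).indicator (fun ω => Real.exp (l * S t ω)) ω ∂P :=
          Finset.sum_le_sum (fun t _ => hkey1 t)
      _ ≤ ∑ t ∈ Finset.Icc 1 v,
            ∫ ω, (A t).indicator (fun ω => Real.exp (l * S v ω)) ω ∂P :=
          Finset.sum_le_sum (fun t ht => hkey2 t (Finset.mem_Icc.mp ht).2)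
      _ ≤ Real.exp (l ^ 2 * v / 8) := hkey3
  have hsumle : ∑ t ∈ Finset.Icc 1 v, (P (A t)).toReal
      ≤ Real.exp (-(l * ε) + l ^ 2 * v / 8) := by
    rw [Real.exp_add, Real.exp_neg]
    rw [← le_div_iff₀' (Real.exp_pos (l * ε))] at hchain
    calc ∑ t ∈ Finset.Icc 1 v, (P (A t)).toReal
        ≤ Real.exp (l ^ 2 * v / 8) / Real.exp (l * ε) := hchain
      _ = (Real.exp (l * ε))⁻¹ * Real.exp (l ^ 2 * v / 8) := by ring
  calc P {ω | ∃ t, 1 ≤ t ∧ t ≤ v ∧ ε ≤ S t ω}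
      ≤ ∑ t ∈ Finset.Icc 1 v, P (A t) := by
        rw [hE]
        exact measure_biUnion_finset_le _ _
    _ = ENNReal.ofReal (∑ t ∈ Finset.Icc 1 v, (P (A t)).toReal) := by
        rw [ENNReal.ofReal_sum_of_nonneg (fun t _ => ENNReal.toReal_nonneg)]
        exact Finset.sum_congr rfl (fun t _ => (ENNReal.ofReal_toReal (measure_ne_top P _)).symm)
    _ ≤ ENNReal.ofReal (Real.exp (-(l * ε) + l ^ 2 * v / 8)) := ENNReal.ofReal_le_ofReal hsumle

variable {Ω : Type*} [MeasurableSpace Ω] {P : Measure Ω} [IsProbabilityMeasure P]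

lemma mgf_aux (W : Ω → ℝ) (hWm : Measurable W) (hWb : ∀ ω, W ω ∈ Set.Icc (0:ℝ) 1)
    (p : ℝ) (hp : ∫ ω, W ω ∂P = p) (l : ℝ) (hl : 0 ≤ l) :
    ∫ ω, Real.exp (l * (W ω - p)) ∂P ≤ Real.exp (l ^ 2 / 8) := by
  have hWint : Integrable W P :=
    integrable_of_bound W hWm 1 (fun ω => abs_le.mpr ⟨by linarith [(hWb ω).1], (hWb ω).2⟩)
  have hp0 : 0 ≤ p := hp ▸ integral_nonneg (fun ω => (hWb ω).1)
  have hp1 : p ≤ 1 := by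
    rw [← hp]
    calc ∫ ω, W ω ∂P ≤ ∫ _ω, (1:ℝ) ∂P := integral_mono hWint (integrable_const 1)
          (fun ω => (hWb ω).2)
      _ = 1 := by simp
  have hpoint : ∀ ω, Real.exp (l * (W ω - p))
      ≤ (1 - W ω) * Real.exp (-(l * p)) + W ω * Real.exp (l * (1 - p)) := by
    intro ω
    have hc := convexOn_exp.2 (Set.mem_univ (-(l * p))) (Set.mem_univ (l * (1 - p)))
      (by linarith [(hWb ω).2] : (0:ℝ) ≤ 1 - W ω) (hWb ω).1 (by ring)
    simp only [smul_eq_mul] at hc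
    calc Real.exp (l * (W ω - p))
        = Real.exp ((1 - W ω) * -(l * p) + W ω * (l * (1 - p))) := by ring_nf
      _ ≤ (1 - W ω) * Real.exp (-(l * p)) + W ω * Real.exp (l * (1 - p)) := hc
  calc ∫ ω, Real.exp (l * (W ω - p)) ∂P
      ≤ ∫ ω, ((1 - W ω) * Real.exp (-(l * p)) + W ω * Real.exp (l * (1 - p))) ∂P := by
        apply integral_mono _ _ hpoint
        · apply integrable_of_bound _ ((hWm.sub_const p).const_mul l).exp (Real.exp l)
          intro ω
          rw [abs_of_pos (exp_pos _)]
          apply exp_le_exp.mpr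
          have h1 : W ω - p ≤ 1 := by linarith [(hWb ω).2]
          nlinarith
        · apply Integrable.add
          · exact ((integrable_const (1:ℝ)).sub hWint).mul_const _
          · exact hWint.mul_const _
    _ = ∫ ω, (Real.exp (-(l * p)) + W ω * (Real.exp (l * (1 - p)) - Real.exp (-(l * p)))) ∂P := by
        congr 1
        funext ω
        ring
    _ = (1 - p) * Real.exp (-(l * p)) + p * Real.exp (l * (1 - p)) := by
        rw [integral_add (integrable_const _) (hWint.mul_const _), integral_const,
          integral_mul_const, hp]
        simp only [probReal_univ, smul_eq_mul, one_mul]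
        ring
    _ ≤ Real.exp (l ^ 2 / 8) := mgf_bernoulli p hp0 hp1 l hl

-- numeric: log 1.12 ≥ 0.112
lemma log_one_point_one_two : (0.112 : ℝ) ≤ Real.log 1.12 := by
  rw [Real.le_log_iff_exp_le (by norm_num : (0:ℝ) < 1.12)]
  have hx : |(0.112:ℝ)| ≤ 1 := by rw [abs_of_nonneg (by norm_num)]; norm_num
  have hb := Real.exp_bound hx (n := 3) (by norm_num)
  have h3 : ∑ i ∈ Finset.range 3, (0.112:ℝ) ^ i / i.factorial
      = 1 + 0.112 + 0.112 ^ 2 / 2 := by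
    norm_num [Finset.sum_range_succ, Nat.factorial]
  rw [h3] at hb
  have h4 := (abs_le.mp hb).2
  rw [abs_of_nonneg (by norm_num : (0:ℝ) ≤ 0.112)] at h4
  norm_num [Nat.factorial] at h4 ⊢
  linarith

lemma log_two_ge : (0.112 : ℝ) ≤ Real.log 2 := by
  linarith [Real.log_two_gt_d9]

-- partial sums of 1/(k+1)^2 bounded by 2
lemma sum_inv_sq_le (K : ℕ) : ∑ k ∈ Finset.range K, (1:ℝ) / ((k:ℝ) + 1) ^ 2 ≤ 2 := by
  have h : ∀ K : ℕ, ∑ k ∈ Finset.range K, (1:ℝ) / ((k:ℝ) + 1) ^ 2 ≤ 2 - 2 / ((K:ℝ) + 1) := by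
    intro K
    induction K with
    | zero => simp
    | succ K ih =>
      rw [Finset.sum_range_succ]
      have hK : (0:ℝ) < (K:ℝ) + 1 := by positivity
      have hK2 : (0:ℝ) < (K:ℝ) + 2 := by positivity
      have key : (1:ℝ) / ((K:ℝ) + 1) ^ 2 ≤ 2 / ((K:ℝ) + 1) - 2 / ((K:ℝ) + 2) := by
        rw [div_sub_div _ _ (ne_of_gt hK) (ne_of_gt hK2), div_le_div_iff₀ (by positivity) (by positivity)]
        ring_nf
        nlinarith
      push_cast
      have hrw : ((K:ℝ) + 1 + 1) = (K:ℝ) + 2 := by ring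
      rw [hrw]
      linarith
  have h2 : (0:ℝ) ≤ 2 / ((K:ℝ) + 1) := by positivity
  linarith [h K]

end Helpers

set_option maxHeartbeats 1000000 in
theorem adaptive_knn_lil
    {Ω : Type*} [MeasurableSpace Ω] (P : Measure Ω) [IsProbabilityMeasure P]
    (n : ℕ) (hn : 1 ≤ n) (δ : ℝ) (hδ0 : 0 < δ) (hδ1 : δ < 1)
    (X : Fin n → ℕ → Ω → ℝ) (d : Fin n → ℝ)
    (hmeas : ∀ i t, Measurable (X i t))
    (hbdd : ∀ i t ω, X i t ω ∈ Set.Icc (0 : ℝ) 1)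
    (hmean : ∀ i t, ∫ ω, X i t ω ∂P = d i)
    (hindep : iIndepFun
      (fun p : Fin n × ℕ => X p.1 p.2) P) :
    ENNReal.ofReal (1 - δ) ≤
      P {ω | ∀ i : Fin n, ∀ t : ℕ, 1 ≤ t →
        |(1 / t : ℝ) * ∑ s ∈ Finset.range t, X i s ω - d i| ≤
          Real.sqrt (2 * (2 * Real.log (125 * Real.log (1.12 * t) / (δ / n))) / t)} := by
  classical
  have hnR : (1:ℝ) ≤ n := by exact_mod_cast hn
  have hnpos : (0:ℝ) < n := by linarith
  have hδn_pos : 0 < δ / n := div_pos hδ0 hnpos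
  have hδn_le : δ / n ≤ 1 := by rw [div_le_one hnpos]; linarith
  -- the means lie in [0,1]
  have hXint : ∀ i s, Integrable (X i s) P := fun i s =>
    integrable_of_bound _ (hmeas i s) 1
      (fun ω => abs_le.mpr ⟨by linarith [(hbdd i s ω).1], (hbdd i s ω).2⟩)
  have hd01 : ∀ i, d i ∈ Set.Icc (0:ℝ) 1 := by
    intro i
    constructor
    · rw [← hmean i 0]
      exact integral_nonneg fun ω => (hbdd i 0 ω).1
    · rw [← hmean i 0]
      calc ∫ ω, X i 0 ω ∂P ≤ ∫ _ω, (1:ℝ) ∂P :=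
            integral_mono (hXint i 0) (integrable_const 1) (fun ω => (hbdd i 0 ω).2)
        _ = 1 := by simp
  -- notation
  set Lg : ℕ → ℝ := fun u => Real.log (125 * Real.log (1.12 * u) / (δ / n)) with hLgdef
  have hlog112 : ∀ u : ℕ, 1 ≤ u → (0.112:ℝ) ≤ Real.log (1.12 * u) := by
    intro u hu
    have hu' : (1:ℝ) ≤ u := by exact_mod_cast hu
    calc (0.112:ℝ) ≤ Real.log 1.12 := log_one_point_one_two
      _ ≤ Real.log (1.12 * u) := Real.log_le_log (by norm_num) (by nlinarith)
  have hQ14 : ∀ u : ℕ, 1 ≤ u → (14:ℝ) ≤ 125 * Real.log (1.12 * u) / (δ / n) := by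
    intro u hu
    have h := hlog112 u hu
    have h1 : (14:ℝ) ≤ 125 * Real.log (1.12 * u) := by nlinarith
    calc (14:ℝ) ≤ 125 * Real.log (1.12 * u) := h1
      _ ≤ 125 * Real.log (1.12 * u) / (δ / n) := by
          rw [le_div_iff₀ hδn_pos]
          nlinarith
  have hLg_nonneg : ∀ u : ℕ, 1 ≤ u → 0 ≤ Lg u := fun u hu =>
    Real.log_nonneg (by linarith [hQ14 u hu])
  have hLg_mono : ∀ u t : ℕ, 1 ≤ u → u ≤ t → Lg u ≤ Lg t := by
    intro u t hu ht
    have hu' : (1:ℝ) ≤ (u:ℝ) := by exact_mod_cast hu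
    have ht' : (u:ℝ) ≤ (t:ℝ) := by exact_mod_cast ht
    have hlog : Real.log (1.12 * u) ≤ Real.log (1.12 * t) :=
      Real.log_le_log (by nlinarith) (by nlinarith)
    apply Real.log_le_log (by linarith [hQ14 u hu])
    gcongr
  -- independence helper: for fixed i, transformed coordinates are independent
  have hindZ : ∀ (i : Fin n) (g : ℝ → ℝ), Measurable g →
      ∀ t s : ℕ, t ≤ s →
        IndepFun (fun ω (r : Fin t) => g (X i r ω)) (fun ω => g (X i s ω)) P := by
    intro i g hg t s hts
    set Sf : Finset (Fin n × ℕ) := (Finset.range t).image (fun r => (i, r)) with hSf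
    have hdisjST : Disjoint Sf ({(i, s)} : Finset (Fin n × ℕ)) := by
      rw [Finset.disjoint_singleton_right]
      intro hmem
      obtain ⟨r, hr, hre⟩ := Finset.mem_image.mp hmem
      have h1 : r = s := congrArg Prod.snd hre
      have h2 : r < t := Finset.mem_range.mp hr
      omega
    have base := hindep.indepFun_finset Sf {(i, s)} hdisjST (fun q => hmeas q.1 q.2)
    have hmemS : ∀ r : Fin t, ((i, (r : ℕ)) : Fin n × ℕ) ∈ Sf := fun r =>
      Finset.mem_image.mpr ⟨r.1, Finset.mem_range.mpr r.isLt, rfl⟩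
    have hL : Measurable (fun (x : Sf → ℝ) => fun r : Fin t => g (x ⟨(i, (r : ℕ)), hmemS r⟩)) :=
      measurable_pi_lambda _ (fun r => hg.comp (measurable_pi_apply _))
    have hR : Measurable (fun (y : ({(i, s)} : Finset (Fin n × ℕ)) → ℝ) =>
        g (y ⟨(i, s), Finset.mem_singleton_self _⟩)) :=
      hg.comp (measurable_pi_apply _)
    exact base.comp hL hR
  -- generic block bound via the maximal inequality
  have hblock : ∀ (k : ℕ) (Z : ℕ → Ω → ℝ),
      (∀ s, Measurable (Z s)) → (∀ s ω, |Z s ω| ≤ 1) → (∀ s, ∫ ω, Z s ω ∂P = 0) →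
      (∀ t s, t ≤ s → IndepFun (fun ω (r : Fin t) => Z r ω) (Z s) P) →
      (∀ (l : ℝ), 0 ≤ l → ∀ s, ∫ ω, Real.exp (l * Z s ω) ∂P ≤ Real.exp (l ^ 2 / 8)) →
      P {ω | ∃ t, 1 ≤ t ∧ t ≤ 2 ^ (k+1) ∧
          Real.sqrt (4 * Lg (2 ^ k) * (2:ℝ) ^ k) ≤ ∑ s ∈ Finset.range t, Z s ω}
        ≤ ENNReal.ofReal (Real.exp (-(4 * Lg (2 ^ k)))) := by
    intro k Z hm hb h0 hi hmgf
    have hLgk : 0 ≤ Lg (2 ^ k) := hLg_nonneg (2 ^ k) Nat.one_le_two_pow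
    set E := Real.sqrt (4 * Lg (2 ^ k) * (2:ℝ) ^ k) with hEdef
    set V : ℕ := 2 ^ (k+1) with hVdef
    have hVR : ((V:ℕ):ℝ) = 2 * (2:ℝ) ^ k := by rw [hVdef]; push_cast; ring
    have hVpos : (0:ℝ) < (V:ℝ) := by rw [hVR]; positivity
    set l := 4 * E / (V:ℝ) with hldef
    have hEnonneg : 0 ≤ E := Real.sqrt_nonneg _
    have hlnn : 0 ≤ l := by rw [hldef]; positivity
    have happ := maximal_bound Z hm hb h0 hi l hlnn (hmgf l hlnn) V E
    refine le_trans happ (ENNReal.ofReal_le_ofReal (Real.exp_le_exp.mpr ?_))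
    have hE2 : E ^ 2 = 4 * Lg (2 ^ k) * (2:ℝ) ^ k := Real.sq_sqrt (by positivity)
    have hstep : -(l * E) + l ^ 2 * (V:ℝ) / 8 = -(2 * E ^ 2 / (V:ℝ)) := by
      rw [hldef]
      field_simp
      ring
    rw [hstep, hE2, hVR]
    have h2k : (0:ℝ) < (2:ℝ) ^ k := by positivity
    have : 2 * (4 * Lg (2 ^ k) * (2:ℝ) ^ k) / (2 * (2:ℝ) ^ k) = 4 * Lg (2 ^ k) := by
      field_simp
    rw [this]
  -- the two one-sided block events
  have hPEp : ∀ (i : Fin n) (k : ℕ),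
      P {ω | ∃ t, 1 ≤ t ∧ t ≤ 2 ^ (k+1) ∧
          Real.sqrt (4 * Lg (2 ^ k) * (2:ℝ) ^ k) ≤ ∑ s ∈ Finset.range t, (X i s ω - d i)}
        ≤ ENNReal.ofReal (Real.exp (-(4 * Lg (2 ^ k)))) := by
    intro i k
    apply hblock k (fun s ω => X i s ω - d i)
    · exact fun s => (hmeas i s).sub measurable_const
    · intro s ω
      exact abs_le.mpr ⟨by linarith [(hbdd i s ω).1, (hd01 i).2],
        by linarith [(hbdd i s ω).2, (hd01 i).1]⟩
    · intro s
      rw [integral_sub (hXint i s) (integrable_const _), hmean i s, integral_const]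
      simp
    · exact fun t s hts => hindZ i (fun x => x - d i) (measurable_id.sub measurable_const) t s hts
    · exact fun l hl s => mgf_aux (X i s) (hmeas i s) (hbdd i s) (d i) (hmean i s) l hl
  have hPEm : ∀ (i : Fin n) (k : ℕ),
      P {ω | ∃ t, 1 ≤ t ∧ t ≤ 2 ^ (k+1) ∧
          Real.sqrt (4 * Lg (2 ^ k) * (2:ℝ) ^ k) ≤ ∑ s ∈ Finset.range t, (d i - X i s ω)}
        ≤ ENNReal.ofReal (Real.exp (-(4 * Lg (2 ^ k)))) := by
    intro i k
    apply hblock k (fun s ω => d i - X i s ω)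
    · exact fun s => measurable_const.sub (hmeas i s)
    · intro s ω
      exact abs_le.mpr ⟨by linarith [(hbdd i s ω).2, (hd01 i).1],
        by linarith [(hbdd i s ω).1, (hd01 i).2]⟩
    · intro s
      rw [integral_sub (integrable_const _) (hXint i s), hmean i s, integral_const]
      simp
    · exact fun t s hts => hindZ i (fun x => d i - x) (measurable_const.sub measurable_id) t s hts
    · intro l hl s
      have hW : ∀ ω, (1 - X i s ω) ∈ Set.Icc (0:ℝ) 1 := by
        intro ω
        exact ⟨by linarith [(hbdd i s ω).2], by linarith [(hbdd i s ω).1]⟩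
      have hWmean : ∫ ω, (1 - X i s ω) ∂P = 1 - d i := by
        rw [integral_sub (integrable_const _) (hXint i s), hmean i s, integral_const]
        simp
      have h := mgf_aux (fun ω => 1 - X i s ω) (measurable_const.sub (hmeas i s)) hW
        (1 - d i) hWmean l hl
      calc ∫ ω, Real.exp (l * (d i - X i s ω)) ∂P
          = ∫ ω, Real.exp (l * ((1 - X i s ω) - (1 - d i))) ∂P := by
            congr 1
            funext ω
            ring_nf
        _ ≤ Real.exp (l ^ 2 / 8) := h
  -- numeric bound per block
  have hnum : ∀ k : ℕ, 2 * Real.exp (-(4 * Lg (2 ^ k)))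
      ≤ δ / n * (1 / ((k:ℝ) + 1) ^ 2) * (1 / 2) := by
    intro k
    have hkge : (0:ℝ) ≤ (k:ℝ) := Nat.cast_nonneg k
    set c : ℝ := (k:ℝ) + 1 with hcdef
    set a : ℝ := δ / n with hadef
    have hc0 : (0:ℝ) < c := by rw [hcdef]; positivity
    have hc1 : (1:ℝ) ≤ c := by rw [hcdef]; linarith
    have ha0 : (0:ℝ) < a := hδn_pos
    have ha1 : a ≤ 1 := hδn_le
    clear_value c a
    have hlogval : Real.log (1.12 * ((2 ^ k : ℕ):ℝ)) = Real.log 1.12 + k * Real.log 2 := by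
      push_cast
      rw [Real.log_mul (by norm_num) (by positivity), Real.log_pow]
    have hlogge : 0.112 * c ≤ Real.log (1.12 * ((2 ^ k : ℕ):ℝ)) := by
      rw [hlogval, hcdef]
      have h1 := log_one_point_one_two
      have h2 := log_two_ge
      nlinarith
    have hbase : (14:ℝ) * c ≤ 125 * Real.log (1.12 * ((2 ^ k : ℕ):ℝ)) := by nlinarith
    have hQge : 14 * c / a ≤ 125 * Real.log (1.12 * ((2 ^ k : ℕ):ℝ)) / a := by
      rw [div_le_div_iff₀ ha0 ha0]
      nlinarith [mul_nonneg (sub_nonneg.mpr hbase) ha0.le]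
    have hQpos : (0:ℝ) < 14 * c / a := by positivity
    have hQpos2 : (0:ℝ) < 125 * Real.log (1.12 * ((2 ^ k : ℕ):ℝ)) / a :=
      lt_of_lt_of_le hQpos hQge
    have hexp : Real.exp (-(4 * Lg (2 ^ k)))
        = ((125 * Real.log (1.12 * ((2 ^ k : ℕ):ℝ)) / a) ^ 4)⁻¹ := by
      have h4 : (4:ℝ) * Lg (2 ^ k)
          = Real.log ((125 * Real.log (1.12 * ((2 ^ k : ℕ):ℝ)) / a) ^ 4) := by
        rw [Real.log_pow]
        norm_num [hLgdef, hadef]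
      rw [h4, Real.exp_neg, Real.exp_log (by positivity)]
    rw [hexp]
    have hmain : ((125 * Real.log (1.12 * ((2 ^ k : ℕ):ℝ)) / a) ^ 4)⁻¹
        ≤ ((14 * c / a) ^ 4)⁻¹ := by
      apply inv_anti₀ (by positivity)
      exact pow_le_pow_left₀ hQpos.le hQge 4
    have hsimp : ((14 * c / a) ^ 4)⁻¹ = a ^ 4 / (14 * c) ^ 4 := by
      rw [div_pow, inv_div]
    have ha4 : a ^ 4 ≤ a := by
      calc a ^ 4 ≤ a ^ 1 := pow_le_pow_of_le_one ha0.le ha1 (by norm_num)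
        _ = a := pow_one _
    have hc24 : c ^ 2 ≤ c ^ 4 := pow_le_pow_right₀ hc1 (by norm_num)
    have hfin : 2 * (a ^ 4 / (14 * c) ^ 4) ≤ a * (1 / c ^ 2) * (1 / 2) := by
      have lhs_eq : 2 * (a ^ 4 / (14 * c) ^ 4) = (2 * a ^ 4) / ((14 * c) ^ 4) := by ring
      have rhs_eq : a * (1 / c ^ 2) * (1 / 2) = a / (2 * c ^ 2) := by
        ring
      rw [lhs_eq, rhs_eq, div_le_div_iff₀ (by positivity) (by positivity)]
      have h2 : a ^ 4 * c ^ 2 ≤ a * c ^ 4 := by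
        calc a ^ 4 * c ^ 2 ≤ a * c ^ 2 :=
              mul_le_mul_of_nonneg_right ha4 (by positivity)
          _ ≤ a * c ^ 4 := mul_le_mul_of_nonneg_left hc24 ha0.le
      have h3 : (0:ℝ) ≤ a * c ^ 4 := by positivity
      nlinarith [h2, h3]
    calc 2 * ((125 * Real.log (1.12 * ((2 ^ k : ℕ):ℝ)) / a) ^ 4)⁻¹
        ≤ 2 * (a ^ 4 / (14 * c) ^ 4) := by
          rw [← hsimp]
          linarith [hmain]
      _ ≤ a * (1 / c ^ 2) * (1 / 2) := hfin
  -- the good event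
  set G : Set Ω := {ω | ∀ i : Fin n, ∀ t : ℕ, 1 ≤ t →
      |(1 / t : ℝ) * ∑ s ∈ Finset.range t, X i s ω - d i| ≤
        Real.sqrt (2 * (2 * Real.log (125 * Real.log (1.12 * t) / (δ / n))) / t)} with hGdef
  have hGmeas : MeasurableSet G := by
    have hrepr : G = ⋂ (i : Fin n), ⋂ (t : ℕ), {ω | 1 ≤ t →
        |(1 / t : ℝ) * ∑ s ∈ Finset.range t, X i s ω - d i| ≤
          Real.sqrt (2 * (2 * Real.log (125 * Real.log (1.12 * t) / (δ / n))) / t)} := by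
      ext ω
      simp [hGdef, Set.mem_iInter]
    rw [hrepr]
    refine MeasurableSet.iInter fun i => MeasurableSet.iInter fun t => ?_
    by_cases h1t : 1 ≤ t
    · simp only [h1t, true_implies]
      exact measurableSet_le
        ((((Finset.measurable_sum _ (fun s _ => hmeas i s)).const_mul (1 / t : ℝ)).sub
          measurable_const).abs) measurable_const
    · have : {ω : Ω | 1 ≤ t →
          |(1 / t : ℝ) * ∑ s ∈ Finset.range t, X i s ω - d i| ≤
            Real.sqrt (2 * (2 * Real.log (125 * Real.log (1.12 * t) / (δ / n))) / t)}
          = Set.univ := by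
        ext ω
        simp [h1t]
      rw [this]
      exact MeasurableSet.univ
  -- inclusion of the bad event in the union of block events
  have hincl : Gᶜ ⊆ ⋃ (i : Fin n), ⋃ (k : ℕ),
      ({ω | ∃ t, 1 ≤ t ∧ t ≤ 2 ^ (k+1) ∧
          Real.sqrt (4 * Lg (2 ^ k) * (2:ℝ) ^ k) ≤ ∑ s ∈ Finset.range t, (X i s ω - d i)}
        ∪ {ω | ∃ t, 1 ≤ t ∧ t ≤ 2 ^ (k+1) ∧
          Real.sqrt (4 * Lg (2 ^ k) * (2:ℝ) ^ k) ≤ ∑ s ∈ Finset.range t, (d i - X i s ω)}) := by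
    intro ω hω
    have hω' : ¬ (∀ i : Fin n, ∀ t : ℕ, 1 ≤ t →
        |(1 / t : ℝ) * ∑ s ∈ Finset.range t, X i s ω - d i| ≤
          Real.sqrt (2 * (2 * Real.log (125 * Real.log (1.12 * t) / (δ / n))) / t)) := hω
    push_neg at hω'
    obtain ⟨i, t, h1t, hviol⟩ := hω'
    set k := Nat.log 2 t with hkdef
    have hk1 : 2 ^ k ≤ t := Nat.pow_log_le_self 2 (by omega)
    have hk2 : t < 2 ^ (k+1) := Nat.lt_pow_succ_log_self (by norm_num) t
    have htpos : (0:ℝ) < t := by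
      have : 0 < t := by omega
      exact_mod_cast this
    have hLgt0 : 0 ≤ Lg t := hLg_nonneg t h1t
    have hLgk0 : 0 ≤ Lg (2 ^ k) := hLg_nonneg _ Nat.one_le_two_pow
    have hmonoLg : Lg (2 ^ k) ≤ Lg t := hLg_mono (2 ^ k) t Nat.one_le_two_pow hk1
    have h2kt : (2:ℝ) ^ k ≤ (t:ℝ) := by exact_mod_cast hk1
    -- rewrite the deviation
    have hsum : ∑ s ∈ Finset.range t, (X i s ω - d i)
        = (∑ s ∈ Finset.range t, X i s ω) - t * d i := by
      rw [Finset.sum_sub_distrib, Finset.sum_const, Finset.card_range, nsmul_eq_mul]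
    have habs : |(1 / t : ℝ) * ∑ s ∈ Finset.range t, X i s ω - d i|
        = |∑ s ∈ Finset.range t, (X i s ω - d i)| / t := by
      have h1 : (1 / t : ℝ) * ∑ s ∈ Finset.range t, X i s ω - d i
          = ((∑ s ∈ Finset.range t, X i s ω) - t * d i) / t := by
        field_simp
      rw [h1, ← hsum, abs_div, abs_of_pos htpos]
    have hsqrt_arg : 2 * (2 * Real.log (125 * Real.log (1.12 * t) / (δ / n))) / (t:ℝ)
        = 4 * Lg t / t := by
      have : Lg t = Real.log (125 * Real.log (1.12 * t) / (δ / n)) := rfl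
      rw [this]
      ring
    rw [hsqrt_arg, habs] at hviol
    have hteq : Real.sqrt (4 * Lg t / t) * t = Real.sqrt (4 * Lg t * t) := by
      have harg : 4 * Lg t * (t:ℝ) = (4 * Lg t / t) * (t:ℝ) ^ 2 := by
        field_simp
      rw [harg, Real.sqrt_mul (div_nonneg (by linarith) htpos.le) ((t:ℝ) ^ 2),
        Real.sqrt_sq htpos.le]
    have hviol2 : Real.sqrt (4 * Lg t * t) < |∑ s ∈ Finset.range t, (X i s ω - d i)| := by
      calc Real.sqrt (4 * Lg t * t) = Real.sqrt (4 * Lg t / t) * t := hteq.symm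
        _ < (|∑ s ∈ Finset.range t, (X i s ω - d i)| / t) * t :=
            mul_lt_mul_of_pos_right hviol htpos
        _ = |∑ s ∈ Finset.range t, (X i s ω - d i)| := by
            field_simp
    have hprod : 4 * Lg (2 ^ k) * (2:ℝ) ^ k ≤ 4 * Lg t * t := by
      apply mul_le_mul (by linarith) h2kt (by positivity) (by linarith)
    have heps : Real.sqrt (4 * Lg (2 ^ k) * (2:ℝ) ^ k)
        ≤ |∑ s ∈ Finset.range t, (X i s ω - d i)| :=
      le_trans (Real.sqrt_le_sqrt hprod) hviol2.le
    simp only [Set.mem_iUnion, Set.mem_union, Set.mem_setOf_eq]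
    refine ⟨i, k, ?_⟩
    rcases abs_cases (∑ s ∈ Finset.range t, (X i s ω - d i)) with ⟨hab, _⟩ | ⟨hab, _⟩
    · exact Or.inl ⟨t, h1t, le_of_lt hk2, by rw [hab] at heps; exact heps⟩
    · refine Or.inr ⟨t, h1t, le_of_lt hk2, ?_⟩
      have hneg : ∑ s ∈ Finset.range t, (d i - X i s ω)
          = -∑ s ∈ Finset.range t, (X i s ω - d i) := by
        rw [← Finset.sum_neg_distrib]
        apply Finset.sum_congr rfl
        intros
        ring
      rw [hneg, ← hab]
      exact heps
  -- measure of the bad event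
  have hcompl : P Gᶜ ≤ ENNReal.ofReal δ := by
    refine le_trans (measure_mono hincl) ?_
    refine le_trans (measure_iUnion_le _) ?_
    have hone : ∀ i : Fin n, P (⋃ (k : ℕ),
        ({ω | ∃ t, 1 ≤ t ∧ t ≤ 2 ^ (k+1) ∧
            Real.sqrt (4 * Lg (2 ^ k) * (2:ℝ) ^ k) ≤ ∑ s ∈ Finset.range t, (X i s ω - d i)}
          ∪ {ω | ∃ t, 1 ≤ t ∧ t ≤ 2 ^ (k+1) ∧
            Real.sqrt (4 * Lg (2 ^ k) * (2:ℝ) ^ k) ≤ ∑ s ∈ Finset.range t, (d i - X i s ω)}))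
        ≤ ENNReal.ofReal (δ / n) := by
      intro i
      refine le_trans (measure_iUnion_le _) ?_
      have hterm : ∀ k : ℕ, P
          ({ω | ∃ t, 1 ≤ t ∧ t ≤ 2 ^ (k+1) ∧
              Real.sqrt (4 * Lg (2 ^ k) * (2:ℝ) ^ k) ≤ ∑ s ∈ Finset.range t, (X i s ω - d i)}
            ∪ {ω | ∃ t, 1 ≤ t ∧ t ≤ 2 ^ (k+1) ∧
              Real.sqrt (4 * Lg (2 ^ k) * (2:ℝ) ^ k) ≤ ∑ s ∈ Finset.range t, (d i - X i s ω)})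
          ≤ ENNReal.ofReal (δ / n * (1 / ((k:ℝ) + 1) ^ 2) * (1 / 2)) := by
        intro k
        refine le_trans (measure_union_le _ _) ?_
        refine le_trans (add_le_add (hPEp i k) (hPEm i k)) ?_
        rw [← ENNReal.ofReal_add (Real.exp_nonneg _) (Real.exp_nonneg _)]
        apply ENNReal.ofReal_le_ofReal
        have := hnum k
        linarith
      refine le_trans (ENNReal.tsum_le_tsum hterm) ?_
      rw [ENNReal.tsum_eq_iSup_sum]
      refine iSup_le fun F => ?_
      obtain ⟨K, hK⟩ := F.exists_nat_subset_range
      calc ∑ k ∈ F, ENNReal.ofReal (δ / n * (1 / ((k:ℝ) + 1) ^ 2) * (1 / 2))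
          ≤ ∑ k ∈ Finset.range K, ENNReal.ofReal (δ / n * (1 / ((k:ℝ) + 1) ^ 2) * (1 / 2)) :=
            Finset.sum_le_sum_of_subset hK
        _ = ENNReal.ofReal (∑ k ∈ Finset.range K, δ / n * (1 / ((k:ℝ) + 1) ^ 2) * (1 / 2)) :=
            (ENNReal.ofReal_sum_of_nonneg (fun k _ => by positivity)).symm
        _ ≤ ENNReal.ofReal (δ / n) := by
            apply ENNReal.ofReal_le_ofReal
            have hs := sum_inv_sq_le K
            have hre : ∑ k ∈ Finset.range K, δ / n * (1 / ((k:ℝ) + 1) ^ 2) * (1 / 2)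
                = (δ / n) * (1 / 2) * ∑ k ∈ Finset.range K, 1 / ((k:ℝ) + 1) ^ 2 := by
              rw [Finset.mul_sum]
              apply Finset.sum_congr rfl
              intros
              ring
            rw [hre]
            nlinarith [hδn_pos]
    calc ∑' (i : Fin n), P (⋃ (k : ℕ),
          ({ω | ∃ t, 1 ≤ t ∧ t ≤ 2 ^ (k+1) ∧
              Real.sqrt (4 * Lg (2 ^ k) * (2:ℝ) ^ k) ≤ ∑ s ∈ Finset.range t, (X i s ω - d i)}
            ∪ {ω | ∃ t, 1 ≤ t ∧ t ≤ 2 ^ (k+1) ∧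
              Real.sqrt (4 * Lg (2 ^ k) * (2:ℝ) ^ k) ≤ ∑ s ∈ Finset.range t, (d i - X i s ω)}))
        ≤ ∑' (i : Fin n), ENNReal.ofReal (δ / n) := ENNReal.tsum_le_tsum hone
      _ = ENNReal.ofReal δ := by
          rw [tsum_fintype]
          rw [Finset.sum_const, Finset.card_univ, Fintype.card_fin, nsmul_eq_mul]
          rw [show ((n : ℕ) : ENNReal) = ENNReal.ofReal (n:ℝ) from (ENNReal.ofReal_natCast n).symm]
          rw [← ENNReal.ofReal_mul (by positivity)]
          congr 1
          field_simp
  -- conclude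
  have h1 := prob_compl_eq_one_sub (μ := P) hGmeas.compl
  rw [compl_compl] at h1
  calc ENNReal.ofReal (1 - δ) = 1 - ENNReal.ofReal δ := by
        rw [ENNReal.ofReal_sub _ hδ0.le, ENNReal.ofReal_one]
    _ ≤ 1 - P Gᶜ := tsub_le_tsub_left hcompl 1
    _ = P G := h1.symm
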